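/- arXiv:1904.06169 — 6 statements merged into one kernel-verified Lean document; each statement's English description precedes it below -/
import Mathlib

section
/- Let c₁ > 0 and suppose (γ_j)_{j∈ℕ} is a real sequence. Define the quadratic-remainder sum S = ∑_{j=1}^∞ ∑_{k=1}^∞ |v(ka + γ_j + … + γ_{j+k-1}) - v(ka) - v'(ka)(γ_j + … + γ_{j+k-1})| where v is C² with sup_{r ≥ z_min}|v''(r)| =: c₁ < ∞ and sup_{r ≥ k z_min}|v''(r)| ≤ |v''(k z_min)| for k ≥ 2 and ∑_k k²|v''(k z_min)| < ∞. If all γ_j + a ≥ z_min, then S ≤ (c₁ + ∑_{k=1}^∞ k²|v''(k z_min)|) ∑_j γ_j². -/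
lemma taylor_aux (v : ℝ → ℝ) (hv : ContDiff ℝ 2 v) (m Cb x h : ℝ)
    (hx : m ≤ x) (hxh : m ≤ x + h) (hC : ∀ r : ℝ, m ≤ r → |deriv (deriv v) r| ≤ Cb) :
    |v (x + h) - v x - deriv v x * h| ≤ Cb * h ^ 2 := by
  have hd1 : Differentiable ℝ v := hv.differentiable (by norm_num)
  have hd2 : Differentiable ℝ (deriv v) := by
    have h2 := (contDiff_succ_iff_deriv (n := 1)).mp (by exact_mod_cast hv)
    exact h2.2.2.differentiable (by norm_num)
  set s : Set ℝ := Set.uIcc x (x + h) with hs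
  have hconv : Convex ℝ s := convex_uIcc _ _
  have hmem : ∀ t ∈ s, m ≤ t := by
    intro t ht
    rcases Set.mem_uIcc.mp ht with ⟨h1, h2⟩ | ⟨h1, h2⟩ <;> linarith
  have hxs : x ∈ s := Set.left_mem_uIcc
  have hys : x + h ∈ s := Set.right_mem_uIcc
  have hdist : ∀ t ∈ s, |t - x| ≤ |h| := by
    intro t ht
    have h1 := le_abs_self h
    have h2 := neg_abs_le h
    rcases Set.mem_uIcc.mp ht with ⟨ha1, ha2⟩ | ⟨ha1, ha2⟩ <;>
      rw [abs_le] <;> constructor <;> linarith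
  have hCb : 0 ≤ Cb := le_trans (abs_nonneg _) (hC m le_rfl)
  have step1 : ∀ t ∈ s, |deriv v t - deriv v x| ≤ Cb * |h| := by
    intro t ht
    have lip := Convex.norm_image_sub_le_of_norm_hasDerivWithin_le (s := s)
      (f := deriv v) (f' := deriv (deriv v))
      (fun r _ => ((hd2 r).hasDerivAt).hasDerivWithinAt)
      (fun r hr => hC r (hmem r hr)) hconv hxs ht
    calc |deriv v t - deriv v x| ≤ Cb * |t - x| := by
          simpa [Real.norm_eq_abs] using lip
    _ ≤ Cb * |h| := mul_le_mul_of_nonneg_left (hdist t ht) hCb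
  have step2 := Convex.norm_image_sub_le_of_norm_hasDerivWithin_le (s := s)
    (f := fun t => v t - t * deriv v x) (f' := fun t => deriv v t - deriv v x)
    (fun r _ => (((hd1 r).hasDerivAt).sub (hasDerivAt_mul_const (deriv v x))).hasDerivWithinAt)
    (fun r hr => by simpa [Real.norm_eq_abs] using step1 r hr) hconv hxs hys
  have key : |v (x+h) - (x+h) * deriv v x - (v x - x * deriv v x)| ≤ Cb * |h| * |x + h - x| := by
    simpa [Real.norm_eq_abs] using step2
  calc |v (x + h) - v x - deriv v x * h|
      = |v (x+h) - (x+h) * deriv v x - (v x - x * deriv v x)| := by congr 1; ring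
    _ ≤ Cb * |h| * |x + h - x| := key
    _ = Cb * h ^ 2 := by
        rw [add_sub_cancel_left, mul_assoc, ← abs_mul,
          show h * h = h ^ 2 by ring, abs_of_nonneg (sq_nonneg h)]


set_option maxHeartbeats 1000000 in
/-- Taylor-remainder estimate for the surface energy: under bounds on the
second derivative of `v`, the double sum of quadratic remainders is summable
and bounded by `(c₁ + ∑ k² |v''(k z_min)|) ∑ γ_j²`. -/
theorem stmt_6 (v : ℝ → ℝ) (a zmin c₁ : ℝ) (γ : ℕ → ℝ)
    (hv : ContDiff ℝ 2 v) (hzmin : 0 < zmin) (ha : zmin ≤ a)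
    (hc₁ : ∀ r : ℝ, zmin ≤ r → |deriv (deriv v) r| ≤ c₁)
    (hk : ∀ k : ℕ, 2 ≤ k → ∀ r : ℝ, (k : ℝ) * zmin ≤ r →
        |deriv (deriv v) r| ≤ |deriv (deriv v) ((k : ℝ) * zmin)|)
    (hsum : Summable (fun k : ℕ => ((k : ℝ)) ^ 2 * |deriv (deriv v) ((k : ℝ) * zmin)|))
    (hγ : ∀ j : ℕ, zmin ≤ γ j + a)
    (hγ2 : Summable (fun j : ℕ => (γ j) ^ 2)) :
    Summable (fun q : ℕ × ℕ =>
        |v (((q.2 : ℝ) + 1) * a + ∑ i ∈ Finset.Ico q.1 (q.1 + (q.2 + 1)), γ i)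
          - v (((q.2 : ℝ) + 1) * a)
          - deriv v (((q.2 : ℝ) + 1) * a) * ∑ i ∈ Finset.Ico q.1 (q.1 + (q.2 + 1)), γ i|) ∧
    (∑' q : ℕ × ℕ,
        |v (((q.2 : ℝ) + 1) * a + ∑ i ∈ Finset.Ico q.1 (q.1 + (q.2 + 1)), γ i)
          - v (((q.2 : ℝ) + 1) * a)
          - deriv v (((q.2 : ℝ) + 1) * a) * ∑ i ∈ Finset.Ico q.1 (q.1 + (q.2 + 1)), γ i|)
      ≤ (c₁ + ∑' k : ℕ, ((k : ℝ)) ^ 2 * |deriv (deriv v) ((k : ℝ) * zmin)|)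
          * ∑' j : ℕ, (γ j) ^ 2 := by
  have hTnn : 0 ≤ ∑' j : ℕ, (γ j) ^ 2 := tsum_nonneg fun j => sq_nonneg _
  have hc₁nn : 0 ≤ c₁ := le_trans (abs_nonneg _) (hc₁ zmin le_rfl)
  -- the per-row curvature bound
  set C : ℕ → ℝ := fun k => if k = 0 then c₁ else |deriv (deriv v) (((k : ℝ) + 1) * zmin)|
    with hCdef
  have hCnn : ∀ k, 0 ≤ C k := by
    intro k
    by_cases hk0 : k = 0 <;> simp [hCdef, hk0, hc₁nn, abs_nonneg]
  have hCbound : ∀ k : ℕ, ∀ r : ℝ, ((k : ℝ) + 1) * zmin ≤ r → |deriv (deriv v) r| ≤ C k := by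
    intro k r hr
    match k with
    | 0 =>
      have : zmin ≤ r := by push_cast at hr; linarith
      simpa [hCdef] using hc₁ r this
    | (n + 1) =>
      have h2 : (2 : ℕ) ≤ n + 2 := by omega
      have hr' : ((n + 2 : ℕ) : ℝ) * zmin ≤ r := by push_cast at hr ⊢; linarith
      have := hk (n + 2) h2 r hr'
      have hcast : ((n + 2 : ℕ) : ℝ) = ((n + 1 : ℕ) : ℝ) + 1 := by push_cast; ring
      simpa [hCdef, hcast] using this
  -- block sums of squares
  set B : ℕ → ℕ → ℝ := fun k j => ∑ i ∈ Finset.Ico j (j + (k + 1)), (γ i) ^ 2 with hBdef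
  have hBnn : ∀ k j, 0 ≤ B k j := fun k j => Finset.sum_nonneg fun i _ => sq_nonneg _
  have hBrw : ∀ k j, B k j = ∑ m ∈ Finset.range (k + 1), (γ (j + m)) ^ 2 := by
    intro k j
    simp only [hBdef]
    rw [Finset.sum_Ico_eq_sum_range]
    simp
  have hshift : ∀ m : ℕ, Summable (fun j : ℕ => (γ (j + m)) ^ 2) :=
    fun m => (summable_nat_add_iff m).mpr hγ2
  have hBsum : ∀ k, Summable (B k) := by
    intro k
    have : Summable (fun j => ∑ m ∈ Finset.range (k + 1), (γ (j + m)) ^ 2) :=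
      summable_sum fun m _ => hshift m
    exact this.congr fun j => (hBrw k j).symm
  have hshift_le : ∀ m : ℕ, ∑' j : ℕ, (γ (j + m)) ^ 2 ≤ ∑' j : ℕ, (γ j) ^ 2 := by
    intro m
    have hpart := Summable.sum_add_tsum_nat_add (f := fun j => (γ j) ^ 2) m hγ2
    have hfin : 0 ≤ ∑ i ∈ Finset.range m, (γ i) ^ 2 :=
      Finset.sum_nonneg fun i _ => sq_nonneg _
    linarith
  have hBle : ∀ k, ∑' j, B k j ≤ ((k : ℝ) + 1) * ∑' j : ℕ, (γ j) ^ 2 := by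
    intro k
    calc ∑' j, B k j = ∑ m ∈ Finset.range (k + 1), ∑' j : ℕ, (γ (j + m)) ^ 2 := by
          rw [tsum_congr (hBrw k), Summable.tsum_finsetSum fun m _ => hshift m]
      _ ≤ ∑ m ∈ Finset.range (k + 1), ∑' j : ℕ, (γ j) ^ 2 :=
          Finset.sum_le_sum fun m _ => hshift_le m
      _ = ((k : ℝ) + 1) * ∑' j : ℕ, (γ j) ^ 2 := by
          rw [Finset.sum_const, Finset.card_range, nsmul_eq_mul]
          push_cast; ring
  -- the dominating function, with coordinates (k, j)
  set g : ℕ × ℕ → ℝ := fun p => C p.1 * (((p.1 : ℝ) + 1) * B p.1 p.2) with hgdef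
  have hgnn : ∀ p, 0 ≤ g p := by
    intro p
    exact mul_nonneg (hCnn _) (mul_nonneg (by positivity) (hBnn _ _))
  have hslice : ∀ k, Summable (fun j => g (k, j)) := by
    intro k
    exact (((hBsum k).mul_left ((k : ℝ) + 1)).mul_left (C k))
  have hE : ∀ k, ∑' j, g (k, j) ≤ C k * ((k : ℝ) + 1) ^ 2 * ∑' j : ℕ, (γ j) ^ 2 := by
    intro k
    have hrw : ∑' j, g (k, j) = C k * (((k : ℝ) + 1) * ∑' j, B k j) := by
      simp only [hgdef]
      rw [tsum_mul_left, tsum_mul_left]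
    rw [hrw]
    have h1 : ((k : ℝ) + 1) * ∑' j, B k j
        ≤ ((k : ℝ) + 1) * (((k : ℝ) + 1) * ∑' j : ℕ, (γ j) ^ 2) :=
      mul_le_mul_of_nonneg_left (hBle k) (by positivity)
    calc C k * (((k : ℝ) + 1) * ∑' j, B k j)
        ≤ C k * (((k : ℝ) + 1) * (((k : ℝ) + 1) * ∑' j : ℕ, (γ j) ^ 2)) :=
          mul_le_mul_of_nonneg_left h1 (hCnn k)
      _ = C k * ((k : ℝ) + 1) ^ 2 * ∑' j : ℕ, (γ j) ^ 2 := by ring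
  have hCsq : Summable (fun k : ℕ => C k * ((k : ℝ) + 1) ^ 2) := by
    rw [← summable_nat_add_iff 1]
    have hbase : Summable (fun n : ℕ =>
        ((n + 2 : ℕ) : ℝ) ^ 2 * |deriv (deriv v) (((n + 2 : ℕ) : ℝ) * zmin)|) :=
      (summable_nat_add_iff 2).mpr hsum
    refine hbase.congr fun n => ?_
    simp only [hCdef]
    have : (n + 1 : ℕ) ≠ 0 := by omega
    rw [if_neg this]
    push_cast
    ring
  have hEsummable : Summable (fun k : ℕ =>
      C k * ((k : ℝ) + 1) ^ 2 * ∑' j : ℕ, (γ j) ^ 2) :=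
    hCsq.mul_right _
  have houter : Summable (fun k => ∑' j, g (k, j)) := by
    refine Summable.of_nonneg_of_le (fun k => tsum_nonneg fun j => hgnn _) hE hEsummable
  have hgsummable : Summable g :=
    (summable_prod_of_nonneg hgnn).mpr ⟨hslice, houter⟩
  -- pointwise bound on the remainder
  set D : ℕ × ℕ → ℝ := fun q => g (q.2, q.1) with hDdef
  have hDsummable : Summable D := by
    have : Summable (D ∘ (Equiv.prodComm ℕ ℕ)) := hgsummable
    exact (Equiv.summable_iff _).mp this
  have hRD : ∀ q : ℕ × ℕ,
      |v (((q.2 : ℝ) + 1) * a + ∑ i ∈ Finset.Ico q.1 (q.1 + (q.2 + 1)), γ i)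
        - v (((q.2 : ℝ) + 1) * a)
        - deriv v (((q.2 : ℝ) + 1) * a) * ∑ i ∈ Finset.Ico q.1 (q.1 + (q.2 + 1)), γ i|
      ≤ D q := by
    rintro ⟨j, k⟩
    simp only
    set h := ∑ i ∈ Finset.Ico j (j + (k + 1)), γ i with hh
    have hx : ((k : ℝ) + 1) * zmin ≤ ((k : ℝ) + 1) * a :=
      mul_le_mul_of_nonneg_left ha (by positivity)
    have hsumrw : ∑ i ∈ Finset.Ico j (j + (k + 1)), (γ i + a) = h + ((k : ℝ) + 1) * a := by
      rw [Finset.sum_add_distrib, Finset.sum_const, Nat.card_Ico]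
      have : j + (k + 1) - j = k + 1 := by omega
      rw [this, nsmul_eq_mul]
      push_cast; ring
    have hge : ((k : ℝ) + 1) * zmin ≤ ∑ i ∈ Finset.Ico j (j + (k + 1)), (γ i + a) := by
      have hcard := Finset.card_nsmul_le_sum (Finset.Ico j (j + (k + 1)))
        (fun i => γ i + a) zmin (fun i _ => hγ i)
      rw [Nat.card_Ico] at hcard
      have : j + (k + 1) - j = k + 1 := by omega
      rw [this, nsmul_eq_mul] at hcard
      push_cast at hcard
      linarith
    have hxh : ((k : ℝ) + 1) * zmin ≤ ((k : ℝ) + 1) * a + h := by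
      rw [hsumrw] at hge; linarith
    have htay := taylor_aux v hv (((k : ℝ) + 1) * zmin) (C k) (((k : ℝ) + 1) * a) h hx hxh
      (hCbound k)
    have hcs : h ^ 2 ≤ ((k : ℝ) + 1) * B k j := by
      have := sq_sum_le_card_mul_sum_sq (s := Finset.Ico j (j + (k + 1))) (f := γ)
      rw [Nat.card_Ico] at this
      have h' : j + (k + 1) - j = k + 1 := by omega
      rw [h'] at this
      rw [hBdef, hh]
      push_cast at this ⊢
      convert this using 2
    calc |v (((k : ℝ) + 1) * a + h) - v (((k : ℝ) + 1) * a)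
          - deriv v (((k : ℝ) + 1) * a) * h| ≤ C k * h ^ 2 := htay
      _ ≤ C k * (((k : ℝ) + 1) * B k j) := mul_le_mul_of_nonneg_left hcs (hCnn k)
      _ = D (j, k) := rfl
  have hRnn : ∀ q : ℕ × ℕ, (0 : ℝ) ≤
      |v (((q.2 : ℝ) + 1) * a + ∑ i ∈ Finset.Ico q.1 (q.1 + (q.2 + 1)), γ i)
        - v (((q.2 : ℝ) + 1) * a)
        - deriv v (((q.2 : ℝ) + 1) * a) * ∑ i ∈ Finset.Ico q.1 (q.1 + (q.2 + 1)), γ i| :=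
    fun q => abs_nonneg _
  have hRsummable : Summable (fun q : ℕ × ℕ =>
      |v (((q.2 : ℝ) + 1) * a + ∑ i ∈ Finset.Ico q.1 (q.1 + (q.2 + 1)), γ i)
        - v (((q.2 : ℝ) + 1) * a)
        - deriv v (((q.2 : ℝ) + 1) * a) * ∑ i ∈ Finset.Ico q.1 (q.1 + (q.2 + 1)), γ i|) :=
    Summable.of_nonneg_of_le hRnn hRD hDsummable
  refine ⟨hRsummable, ?_⟩
  have htail : ∑' k : ℕ, C k * ((k : ℝ) + 1) ^ 2
      ≤ c₁ + ∑' k : ℕ, ((k : ℝ)) ^ 2 * |deriv (deriv v) ((k : ℝ) * zmin)| := by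
    rw [Summable.tsum_eq_zero_add hCsq]
    have h0 : C 0 * ((0 : ℕ) + 1 : ℝ) ^ 2 = c₁ := by simp [hCdef]
    have h1 : ∑' n : ℕ, C (n + 1) * (((n + 1 : ℕ) : ℝ) + 1) ^ 2
        = ∑' n : ℕ, ((n + 2 : ℕ) : ℝ) ^ 2 * |deriv (deriv v) (((n + 2 : ℕ) : ℝ) * zmin)| := by
      refine tsum_congr fun n => ?_
      simp only [hCdef]
      have : (n + 1 : ℕ) ≠ 0 := by omega
      rw [if_neg this]
      push_cast
      ring
    have h2 : ∑' n : ℕ, ((n + 2 : ℕ) : ℝ) ^ 2 * |deriv (deriv v) (((n + 2 : ℕ) : ℝ) * zmin)|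
        ≤ ∑' k : ℕ, ((k : ℝ)) ^ 2 * |deriv (deriv v) ((k : ℝ) * zmin)| := by
      have hpart := Summable.sum_add_tsum_nat_add
        (f := fun k : ℕ => ((k : ℝ)) ^ 2 * |deriv (deriv v) ((k : ℝ) * zmin)|) 2 hsum
      have hfin : 0 ≤ ∑ i ∈ Finset.range 2,
          ((i : ℝ)) ^ 2 * |deriv (deriv v) ((i : ℝ) * zmin)| :=
        Finset.sum_nonneg fun i _ => by positivity
      push_cast at hpart ⊢
      linarith
    push_cast at h0 h1 h2 ⊢
    linarith
  calc (∑' q : ℕ × ℕ,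
        |v (((q.2 : ℝ) + 1) * a + ∑ i ∈ Finset.Ico q.1 (q.1 + (q.2 + 1)), γ i)
          - v (((q.2 : ℝ) + 1) * a)
          - deriv v (((q.2 : ℝ) + 1) * a) * ∑ i ∈ Finset.Ico q.1 (q.1 + (q.2 + 1)), γ i|)
      ≤ ∑' q : ℕ × ℕ, D q := Summable.tsum_le_tsum hRD hRsummable hDsummable
    _ = ∑' p : ℕ × ℕ, g p := ((Equiv.prodComm ℕ ℕ).tsum_eq D).symm
    _ = ∑' k : ℕ, ∑' j : ℕ, g (k, j) := Summable.tsum_prod hgsummable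
    _ ≤ ∑' k : ℕ, (C k * ((k : ℝ) + 1) ^ 2 * ∑' j : ℕ, (γ j) ^ 2) :=
        Summable.tsum_le_tsum hE houter hEsummable
    _ = (∑' k : ℕ, C k * ((k : ℝ) + 1) ^ 2) * ∑' j : ℕ, (γ j) ^ 2 := tsum_mul_right
    _ ≤ (c₁ + ∑' k : ℕ, ((k : ℝ)) ^ 2 * |deriv (deriv v) ((k : ℝ) * zmin)|)
          * ∑' j : ℕ, (γ j) ^ 2 := mul_le_mul_of_nonneg_right htail hTnn
end

section
/- Let (Q_N) be probability measures on ℝ_+^{N-1} with densities proportional to exp(-β ℰ_N(z)) where ℰ_N(z) - ℰ_N(z') ≥ p·r whenever z' is obtained from z by decreasing a single coordinate z_k ≥ z_max + r to z_k - r (p, r, β > 0). Then Q_N({z : z_k ≥ z_max + r}) ≤ exp(-β p r) for every k and r ≥ 0. -/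
open MeasureTheory

/-- Exponential tail bound for finite-volume Gibbs measures: if decreasing a
single long spacing `z_k ≥ z_max + r` by `r` lowers the energy by at least
`p r`, then the Gibbs probability of `{z_k ≥ z_max + r}` is at most
`exp(-β p r)`. -/
theorem stmt_8 (N : ℕ) (k : Fin N) (ℰ : (Fin N → ℝ) → ℝ) (β p r zmax : ℝ)
    (hβ : 0 < β) (hp : 0 < p) (hr : 0 ≤ r) (hzmax : 0 < zmax)
    (hmeas : Measurable ℰ)
    (hdrop : ∀ z : Fin N → ℝ, zmax + r ≤ z k →
        ℰ (Function.update z k (z k - r)) ≤ ℰ z - p * r)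
    (hint : IntegrableOn (fun z => Real.exp (-β * ℰ z))
        {z : Fin N → ℝ | ∀ i, 0 < z i} volume) :
    (∫ z in {z : Fin N → ℝ | (∀ i, 0 < z i) ∧ zmax + r ≤ z k},
        Real.exp (-β * ℰ z))
      ≤ Real.exp (-β * p * r) *
        ∫ z in {z : Fin N → ℝ | ∀ i, 0 < z i}, Real.exp (-β * ℰ z) := by
  set f : (Fin N → ℝ) → ℝ := fun z => Real.exp (-β * ℰ z) with hf
  set v : Fin N → ℝ := Pi.single k r with hv
  set Ω : Set (Fin N → ℝ) := {z | ∀ i, 0 < z i} with hΩ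
  set A : Set (Fin N → ℝ) := {z | (∀ i, 0 < z i) ∧ zmax + r ≤ z k} with hA
  set B : Set (Fin N → ℝ) := (· + v) ⁻¹' A with hB
  have hΩmeas : MeasurableSet Ω := by
    rw [hΩ, Set.setOf_forall]
    exact MeasurableSet.iInter fun i =>
      measurableSet_lt measurable_const (measurable_pi_apply i)
  have hAmeas : MeasurableSet A :=
    hΩmeas.inter (measurableSet_le measurable_const (measurable_pi_apply k))
  have hsubv : ∀ z : Fin N → ℝ, z - v = Function.update z k (z k - r) := by
    intro z; funext i
    by_cases h : i = k
    · subst h; simp [hv]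
    · simp [hv, Function.update, h, Pi.single_apply]
  have hBΩ : B ⊆ Ω := by
    intro y hy
    obtain ⟨hpos, hk⟩ := hy
    have hk' : zmax + r ≤ y k + r := by simpa [hv] using hk
    intro j
    by_cases h : j = k
    · subst h; linarith
    · have := hpos j
      simpa [hv, Pi.single_apply, h] using this
  have hAΩ : A ⊆ Ω := fun z hz => hz.1
  have hfnn : ∀ z, 0 ≤ f z := fun z => (Real.exp_pos _).le
  -- indicator identity: A.indicator (f ∘ (· - v)) = (B.indicator f) ∘ (· - v)
  have hind : A.indicator (fun z => f (z - v)) = fun z => B.indicator f (z - v) := by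
    funext z
    have hmem : z - v ∈ B ↔ z ∈ A := by
      simp [hB, Set.mem_preimage, sub_add_cancel]
    by_cases h : z ∈ A
    · rw [Set.indicator_of_mem h, Set.indicator_of_mem (hmem.mpr h)]
    · rw [Set.indicator_of_notMem h, Set.indicator_of_notMem (fun hc => h (hmem.mp hc))]
  have hintB : IntegrableOn f B := hint.mono_set hBΩ
  have hBmeas : MeasurableSet B := hAmeas.preimage (by fun_prop)
  -- change of variables
  have hcv : (∫ z in A, f (z - v)) = ∫ z in B, f z := by
    rw [← integral_indicator hAmeas, ← integral_indicator hBmeas, hind]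
    exact integral_sub_right_eq_self (B.indicator f) v
  have hintA2 : IntegrableOn (fun z => f (z - v)) A := by
    have h2 := ((integrable_indicator_iff hBmeas).mpr hintB).comp_sub_right v
    rw [← hind, integrable_indicator_iff hAmeas] at h2
    exact h2
  have hintA : IntegrableOn f A := hint.mono_set hAΩ
  -- pointwise bound on A
  have hpt : ∀ z ∈ A, f z ≤ Real.exp (-β * p * r) * f (z - v) := by
    intro z hz
    rw [hsubv z]
    have h1 : ℰ (Function.update z k (z k - r)) ≤ ℰ z - p * r := hdrop z hz.2
    rw [hf]; dsimp only
    rw [← Real.exp_add]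
    apply Real.exp_le_exp.mpr
    nlinarith [hβ.le]
  calc (∫ z in A, f z) ≤ ∫ z in A, Real.exp (-β * p * r) * f (z - v) :=
        setIntegral_mono_on hintA (hintA2.const_mul _) hAmeas hpt
    _ = Real.exp (-β * p * r) * ∫ z in A, f (z - v) := by
        rw [integral_const_mul]
    _ = Real.exp (-β * p * r) * ∫ z in B, f z := by rw [hcv]
    _ ≤ Real.exp (-β * p * r) * ∫ z in Ω, f z := by
        apply mul_le_mul_of_nonneg_left _ (Real.exp_pos _).le
        exact setIntegral_mono_set hint (Filter.Eventually.of_forall hfnn)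
          (HasSubset.Subset.eventuallyLE hBΩ)
end

section
/- Let v : (0,∞) → ℝ be a pair potential with v(r) = O(r^{-s}) as r → ∞ for s > 2, and define var_k(h) = 2 sup_z |∑_{j=k+1}^∞ v(z₁+…+z_j)| over sequences with all z_j ≥ r_hc > 0. Then var_k(h) = O(k^{-(s-1)}) and C_q := ∑_{k=q+1}^∞ var_k(h) = O(q^{-(s-2)}) as q → ∞; in particular ∑_k var_k(h) < ∞. -/
open MeasureTheory Finset

private lemma summable_shift (t : ℝ) (ht : 1 < t) (k : ℕ) :
    Summable (fun i : ℕ => ((k + 1 + i : ℕ) : ℝ) ^ (-t)) := by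
  have h := (summable_nat_add_iff (f := fun n : ℕ => ((n : ℕ) : ℝ) ^ (-t)) (k+1)).2
    (Real.summable_nat_rpow.2 (by linarith))
  convert h using 2 with i
  · rfl
  simp [add_comm, add_assoc, add_left_comm]

private lemma tail_sum_le (t : ℝ) (ht : 1 < t) (k : ℕ) (hk : 1 ≤ k) :
    ∑' i : ℕ, ((k + 1 + i : ℕ) : ℝ) ^ (-t) ≤ (k : ℝ) ^ (-(t - 1)) / (t - 1) := by
  have hk1 : (1 : ℝ) ≤ (k : ℝ) := by exact_mod_cast hk
  apply Summable.tsum_le_of_sum_range_le (summable_shift t ht k)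
  intro N
  set a : ℕ → ℝ := fun i => (k : ℝ) + i with ha
  have hapos : ∀ i : ℕ, (0 : ℝ) < a i := by
    intro i
    have : (0:ℝ) ≤ (i:ℝ) := Nat.cast_nonneg i
    simp only [ha]
    linarith
  have hint : ∀ i : ℕ, IntervalIntegrable (fun x : ℝ => x ^ (-t)) volume (a i) (a (i+1)) :=
    fun i => intervalIntegral.intervalIntegrable_rpow
      (Or.inr (Set.notMem_uIcc_of_lt (hapos i) (hapos (i+1))))
  have hterm : ∀ i : ℕ, ((k + 1 + i : ℕ) : ℝ) ^ (-t) ≤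
      ∫ x in a i..a (i+1), x ^ (-t) := by
    intro i
    have hab : a i ≤ a (i+1) := by simp only [ha]; push_cast; linarith
    have hconst : (∫ _ in a i..a (i+1), ((k + 1 + i : ℕ) : ℝ) ^ (-t)) =
        ((k + 1 + i : ℕ) : ℝ) ^ (-t) := by
      rw [intervalIntegral.integral_const]
      have : a (i+1) - a i = 1 := by simp only [ha]; push_cast; ring
      rw [this, one_smul]
    rw [← hconst]
    apply intervalIntegral.integral_mono_on hab intervalIntegrable_const (hint i)
    intro x hx
    have hx0 : 0 < x := lt_of_lt_of_le (hapos i) hx.1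
    have hxle : x ≤ ((k + 1 + i : ℕ) : ℝ) := by
      have := hx.2; simp only [ha] at this; push_cast; push_cast at this; linarith
    exact Real.rpow_le_rpow_of_nonpos hx0 hxle (by linarith)
  calc ∑ i ∈ range N, ((k + 1 + i : ℕ) : ℝ) ^ (-t)
      ≤ ∑ i ∈ range N, ∫ x in a i..a (i+1), x ^ (-t) := sum_le_sum fun i _ => hterm i
    _ = ∫ x in (a 0)..(a N), x ^ (-t) :=
        intervalIntegral.sum_integral_adjacent_intervals fun i _ => hint i
    _ = ((a N) ^ (-t + 1) - (a 0) ^ (-t + 1)) / (-t + 1) :=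
        integral_rpow (Or.inr ⟨by intro h; rw [neg_eq_iff_eq_neg] at h; linarith,
          Set.notMem_uIcc_of_lt (hapos 0) (hapos N)⟩)
    _ ≤ (k : ℝ) ^ (-(t - 1)) / (t - 1) := by
        have h1 : a 0 = (k : ℝ) := by simp [ha]
        have h2 : (0:ℝ) ≤ (a N) ^ (-t + 1) := Real.rpow_nonneg (hapos N).le _
        have ht1 : (0:ℝ) < t - 1 := by linarith
        have e : -t + 1 = -(t - 1) := by ring
        rw [h1, e]
        have e2 : ((a N) ^ (-(t-1)) - (k:ℝ) ^ (-(t-1))) / (-(t - 1)) =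
            ((k:ℝ) ^ (-(t-1)) - (a N) ^ (-(t-1))) / (t - 1) := by
          rw [div_neg, ← neg_div, neg_sub]
        rw [e2]
        rw [e] at h2
        gcongr
        linarith




/-- Decay of the variation seminorms of the single-site energy: if
`|v(r)| ≤ C r^{-s}` for `r ≥ r_hc > 0` with `s > 2`, and
`var_k = 2 sup_z |∑_{j=k+1}^∞ v(z₁+…+z_j)|` over sequences with all
`z_j ≥ r_hc`, then `var_k = O(k^{-(s-1)})`,
`C_q = ∑_{k>q} var_k = O(q^{-(s-2)})`, and in particular `∑_k var_k < ∞`. -/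
theorem stmt_12 (v : ℝ → ℝ) (C rhc s : ℝ) (var : ℕ → ℝ)
    (hC : 0 < C) (hrhc : 0 < rhc) (hs : 2 < s)
    (hv : ∀ r : ℝ, rhc ≤ r → |v r| ≤ C * r ^ (-s))
    (hvar : ∀ k : ℕ, var k =
        2 * ⨆ z : {z : ℕ → ℝ // ∀ j, rhc ≤ z j},
          |∑' i : ℕ, v (∑ l ∈ Finset.range (k + 1 + i), z.1 l)|) :
    (∃ C₁ : ℝ, ∀ k : ℕ, 1 ≤ k → var k ≤ C₁ * (k : ℝ) ^ (-(s - 1))) ∧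
    (∃ C₂ : ℝ, ∀ q : ℕ, 1 ≤ q →
        ∑' k : ℕ, var (q + 1 + k) ≤ C₂ * (q : ℝ) ^ (-(s - 2))) ∧
    Summable var := by
  have hs1 : (1:ℝ) < s := by linarith
  set T : ℕ → ℝ := fun k => ∑' i : ℕ, ((k + 1 + i : ℕ) : ℝ) ^ (-s) with hT
  -- key pointwise bound on the sup argument
  have key : ∀ (k : ℕ) (z : {z : ℕ → ℝ // ∀ j, rhc ≤ z j}),
      |∑' i : ℕ, v (∑ l ∈ Finset.range (k + 1 + i), z.1 l)| ≤ C * rhc ^ (-s) * T k := by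
    intro k z
    set S : ℕ → ℝ := fun i => ∑ l ∈ Finset.range (k + 1 + i), z.1 l with hS
    set g : ℕ → ℝ := fun i => C * rhc ^ (-s) * ((k + 1 + i : ℕ) : ℝ) ^ (-s) with hg
    have hgsumm : Summable g := (summable_shift s hs1 k).mul_left _
    have hfg : ∀ i : ℕ, |v (S i)| ≤ g i := by
      intro i
      have hcard : ((k + 1 + i : ℕ) : ℝ) * rhc ≤ S i := by
        have h := Finset.card_nsmul_le_sum (Finset.range (k + 1 + i)) z.1 rhc
          (fun l _ => z.2 l)
        simpa [nsmul_eq_mul] using h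
      have h1 : (1:ℝ) ≤ ((k + 1 + i : ℕ) : ℝ) := by
        exact_mod_cast Nat.one_le_iff_ne_zero.2 (by omega)
      have hpos : (0:ℝ) < ((k + 1 + i : ℕ) : ℝ) * rhc := by nlinarith
      have hrS : rhc ≤ S i := le_trans (by nlinarith) hcard
      calc |v (S i)| ≤ C * (S i) ^ (-s) := hv _ hrS
        _ ≤ C * (((k + 1 + i : ℕ) : ℝ) * rhc) ^ (-s) :=
            mul_le_mul_of_nonneg_left
              (Real.rpow_le_rpow_of_nonpos hpos hcard (by linarith)) hC.le
        _ = g i := by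
            rw [Real.mul_rpow (by positivity) hrhc.le]; ring
    have habs : Summable (fun i => |v (S i)|) :=
      Summable.of_nonneg_of_le (fun i => abs_nonneg _) hfg hgsumm
    have hsumm : Summable (fun i => v (S i)) := habs.of_abs
    have habs' : Summable (fun i => ‖v (S i)‖) :=
      habs.congr fun i => (Real.norm_eq_abs _).symm
    calc |∑' i, v (S i)| = ‖∑' i, v (S i)‖ := (Real.norm_eq_abs _).symm
      _ ≤ ∑' i, ‖v (S i)‖ := norm_tsum_le_tsum_norm habs'
      _ = ∑' i, |v (S i)| := tsum_congr fun i => Real.norm_eq_abs _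
      _ ≤ ∑' i, g i := Summable.tsum_le_tsum hfg habs hgsumm
      _ = C * rhc ^ (-s) * T k := tsum_mul_left
  have hne : Nonempty {z : ℕ → ℝ // ∀ j, rhc ≤ z j} := ⟨⟨fun _ => rhc, fun _ => le_rfl⟩⟩
  have hbdd : ∀ k : ℕ, BddAbove (Set.range fun z : {z : ℕ → ℝ // ∀ j, rhc ≤ z j} =>
      |∑' i : ℕ, v (∑ l ∈ Finset.range (k + 1 + i), z.1 l)|) := by
    intro k
    exact ⟨C * rhc ^ (-s) * T k, by rintro _ ⟨z, rfl⟩; exact key k z⟩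
  have hvar_le : ∀ k : ℕ, var k ≤ 2 * (C * rhc ^ (-s) * T k) := by
    intro k
    rw [hvar k]
    exact mul_le_mul_of_nonneg_left (ciSup_le fun z => key k z) (by norm_num)
  have hvar_nonneg : ∀ k : ℕ, 0 ≤ var k := by
    intro k
    rw [hvar k]
    have h := le_ciSup (hbdd k) hne.some
    have := le_trans (abs_nonneg _) h
    linarith
  set C₁ : ℝ := 2 * C * rhc ^ (-s) / (s - 1) with hC₁
  have hC₁pos : 0 < C₁ := by
    have h1 : (0:ℝ) < s - 1 := by linarith
    rw [hC₁]; positivity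
  have part1 : ∀ k : ℕ, 1 ≤ k → var k ≤ C₁ * (k : ℝ) ^ (-(s - 1)) := by
    intro k hk
    calc var k ≤ 2 * (C * rhc ^ (-s) * T k) := hvar_le k
      _ ≤ 2 * (C * rhc ^ (-s) * ((k : ℝ) ^ (-(s - 1)) / (s - 1))) := by
          have := tail_sum_le s hs1 k hk
          have hpos : (0:ℝ) ≤ C * rhc ^ (-s) := by positivity
          nlinarith [mul_le_mul_of_nonneg_left this hpos]
      _ = C₁ * (k : ℝ) ^ (-(s - 1)) := by rw [hC₁]; ring
  refine ⟨⟨C₁, part1⟩, ⟨C₁ / (s - 2), ?_⟩, ?_⟩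
  · intro q hq
    have hs2 : (1:ℝ) < s - 1 := by linarith
    have hcomp : ∀ k : ℕ, var (q + 1 + k) ≤ C₁ * ((q + 1 + k : ℕ) : ℝ) ^ (-(s - 1)) :=
      fun k => part1 _ (by omega)
    have hsum2 : Summable (fun k : ℕ => C₁ * ((q + 1 + k : ℕ) : ℝ) ^ (-(s - 1))) :=
      (summable_shift (s - 1) hs2 q).mul_left _
    have hvs : Summable (fun k => var (q + 1 + k)) :=
      Summable.of_nonneg_of_le (fun k => hvar_nonneg _) hcomp hsum2
    calc ∑' k : ℕ, var (q + 1 + k)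
        ≤ ∑' k : ℕ, C₁ * ((q + 1 + k : ℕ) : ℝ) ^ (-(s - 1)) := Summable.tsum_le_tsum hcomp hvs hsum2
      _ = C₁ * ∑' k : ℕ, ((q + 1 + k : ℕ) : ℝ) ^ (-(s - 1)) := tsum_mul_left
      _ ≤ C₁ * ((q : ℝ) ^ (-(s - 1 - 1)) / (s - 1 - 1)) :=
          mul_le_mul_of_nonneg_left (tail_sum_le (s - 1) hs2 q hq) hC₁pos.le
      _ = C₁ / (s - 2) * (q : ℝ) ^ (-(s - 2)) := by
          rw [show s - 1 - 1 = s - 2 by ring]; ring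
  · rw [← summable_nat_add_iff 1]
    have hrs : Summable (fun n : ℕ => C₁ * ((n + 1 : ℕ) : ℝ) ^ (-(s - 1))) := by
      have := (summable_nat_add_iff (f := fun n : ℕ => (n : ℝ) ^ (-(s - 1))) 1).2
        (Real.summable_nat_rpow.2 (by linarith))
      exact (this.mul_left C₁).congr (by intro n; push_cast; ring_nf)
    exact Summable.of_nonneg_of_le (fun n => hvar_nonneg _)
      (fun n => part1 (n + 1) (by omega)) hrs
end

section
/- Let M be a symmetric positive-definite real 2d×2d matrix with block form M = [[M₁, M₂],[M₂ᵀ, M₃]] (d×d blocks), and let N be the symmetric positive-semidefinite matrix defined by ⟨x, Nx⟩ = inf_{y∈ℝ^d} ⟨(x,y), M(x,y)⟩ (so N = M₁ - M₂M₃^{-1}M₂ᵀ is the Schur complement). Suppose also ⟨y, Ny⟩ = inf_{x∈ℝ^d} ⟨(x,y), M(x,y)⟩. Then the matrix M̂ := M - diag(½N, ½N) is positive definite. -/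
open scoped Matrix

private lemma quad_aux (a b : ℝ) (h : ∀ t : ℝ, 0 ≤ b * t + a * t ^ 2) : b = 0 := by
  have hmin : IsLocalMin (fun t : ℝ => b * t + a * t ^ 2) 0 := by
    apply Filter.Eventually.of_forall
    intro t
    simpa using h t
  have h1 : HasDerivAt (fun t : ℝ => b * t) (b * 1) 0 := (hasDerivAt_id 0).const_mul b
  have h2 : HasDerivAt (fun t : ℝ => a * t ^ 2) (a * (2 * 0 ^ 1)) 0 :=
    (hasDerivAt_pow 2 0).const_mul a
  have hd : HasDerivAt (fun t : ℝ => b * t + a * t ^ 2) b 0 := by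
    exact (h1.add h2).congr_deriv (by simp)
  exact hmin.hasDerivAt_eq_zero hd

private lemma sym_dot {n : Type*} [Fintype n] (A : Matrix n n ℝ) (hA : Aᵀ = A)
    (u v : n → ℝ) : dotProduct u (A.mulVec v) = dotProduct v (A.mulVec u) := by
  rw [Matrix.dotProduct_mulVec, ← Matrix.mulVec_transpose, hA, dotProduct_comm]

private lemma expand_quad {n : Type*} [Fintype n] (A : Matrix n n ℝ) (hA : Aᵀ = A)
    (v w : n → ℝ) (t : ℝ) :
    dotProduct (v + t • w) (A.mulVec (v + t • w)) =
      dotProduct v (A.mulVec v)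
        + (2 * dotProduct w (A.mulVec v)) * t
        + dotProduct w (A.mulVec w) * t ^ 2 := by
  have hs := sym_dot A hA v w
  simp only [Matrix.mulVec_add, dotProduct_add, add_dotProduct,
    Matrix.mulVec_smul, dotProduct_smul, smul_dotProduct, smul_eq_mul]
  rw [hs]; ring

/-- Positive definiteness of the symmetrized transfer quadratic form: if `M`
is a positive-definite block matrix `[[M₁,M₂],[M₂ᵀ,M₃]]` and `N` is the Schur
complement characterized variationally in both arguments, then
`M̂ = M - diag(½N, ½N)` is positive definite. -/
theorem stmt_15 (d : ℕ) (M₁ M₂ M₃ N : Matrix (Fin d) (Fin d) ℝ)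
    (hM : (Matrix.fromBlocks M₁ M₂ M₂.transpose M₃).PosDef)
    (hNsymm : N.IsSymm) (hNpsd : N.PosSemidef)
    (hN₁ : ∀ x : Fin d → ℝ,
        IsGLB {t : ℝ | ∃ y : Fin d → ℝ,
            t = dotProduct (Sum.elim x y)
                  ((Matrix.fromBlocks M₁ M₂ M₂.transpose M₃).mulVec (Sum.elim x y))}
          (dotProduct x (N.mulVec x)))
    (hN₂ : ∀ y : Fin d → ℝ,
        IsGLB {t : ℝ | ∃ x : Fin d → ℝ,
            t = dotProduct (Sum.elim x y)
                  ((Matrix.fromBlocks M₁ M₂ M₂.transpose M₃).mulVec (Sum.elim x y))}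
          (dotProduct y (N.mulVec y))) :
    (Matrix.fromBlocks M₁ M₂ M₂.transpose M₃
      - Matrix.fromBlocks ((1/2 : ℝ) • N) 0 0 ((1/2 : ℝ) • N)).PosDef := by
  set A := Matrix.fromBlocks M₁ M₂ M₂.transpose M₃ with hAdef
  have hAsymm : Aᵀ = A := by
    have := hM.1
    rwa [Matrix.IsHermitian, Matrix.conjTranspose_eq_transpose_of_trivial] at this
  have hNH : ((1/2 : ℝ) • N).IsHermitian := by
    rw [Matrix.IsHermitian, Matrix.conjTranspose_eq_transpose_of_trivial,
      Matrix.transpose_smul, hNsymm.eq]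
  rw [Matrix.posDef_iff_dotProduct_mulVec]
  constructor
  · refine hM.1.sub ?_
    rw [Matrix.isHermitian_fromBlocks_iff]
    exact ⟨hNH, by simp, by simp, hNH⟩
  · intro v hv
    have hvsplit : v = Sum.elim (v ∘ Sum.inl) (v ∘ Sum.inr) := by
      ext (i | i) <;> rfl
    set x : Fin d → ℝ := v ∘ Sum.inl with hxdef
    set y : Fin d → ℝ := v ∘ Sum.inr with hydef
    rw [star_trivial]
    -- split the quadratic form
    have hsplit : dotProduct v
        ((A - Matrix.fromBlocks ((1/2 : ℝ) • N) 0 0 ((1/2 : ℝ) • N)).mulVec v)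
        = dotProduct (Sum.elim x y) (A.mulVec (Sum.elim x y))
          - (1/2) * dotProduct x (N.mulVec x)
          - (1/2) * dotProduct y (N.mulVec y) := by
      rw [hvsplit]
      simp only [Matrix.sub_mulVec, dotProduct_sub, Matrix.fromBlocks_mulVec,
        Matrix.zero_mulVec, add_zero, zero_add, sumElim_dotProduct_sumElim,
        Matrix.smul_mulVec, dotProduct_smul, smul_eq_mul,
        Sum.elim_comp_inl, Sum.elim_comp_inr]
      ring
    have h1 : ∀ y' : Fin d → ℝ, dotProduct x (N.mulVec x)
        ≤ dotProduct (Sum.elim x y') (A.mulVec (Sum.elim x y')) :=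
      fun y' => (hN₁ x).1 ⟨y', rfl⟩
    have h2 : ∀ x' : Fin d → ℝ, dotProduct y (N.mulVec y)
        ≤ dotProduct (Sum.elim x' y) (A.mulVec (Sum.elim x' y)) :=
      fun x' => (hN₂ y).1 ⟨x', rfl⟩
    by_contra hle
    push_neg at hle
    rw [hsplit] at hle
    have hFx : dotProduct (Sum.elim x y) (A.mulVec (Sum.elim x y))
        = dotProduct x (N.mulVec x) := by linarith [h1 y, h2 x]
    have hFy : dotProduct (Sum.elim x y) (A.mulVec (Sum.elim x y))
        = dotProduct y (N.mulVec y) := by linarith [h1 y, h2 x]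
    -- first-order condition in y
    have hcrit₂ : ∀ z : Fin d → ℝ,
        dotProduct (Sum.elim 0 z) (A.mulVec (Sum.elim x y)) = 0 := by
      intro z
      have hq : ∀ t : ℝ, 0 ≤ (2 * dotProduct (Sum.elim 0 z) (A.mulVec (Sum.elim x y))) * t
          + dotProduct (Sum.elim (0 : Fin d → ℝ) z) (A.mulVec (Sum.elim 0 z)) * t ^ 2 := by
        intro t
        have he : Sum.elim x (y + t • z) = Sum.elim x y + t • Sum.elim (0 : Fin d → ℝ) z := by
          ext (i | i) <;> simp
        have := h1 (y + t • z)
        rw [he, expand_quad A hAsymm, ← hFx] at this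
        linarith
      have := quad_aux _ _ hq
      linarith
    -- first-order condition in x
    have hcrit₁ : ∀ z : Fin d → ℝ,
        dotProduct (Sum.elim z 0) (A.mulVec (Sum.elim x y)) = 0 := by
      intro z
      have hq : ∀ t : ℝ, 0 ≤ (2 * dotProduct (Sum.elim z 0) (A.mulVec (Sum.elim x y))) * t
          + dotProduct (Sum.elim z (0 : Fin d → ℝ)) (A.mulVec (Sum.elim z 0)) * t ^ 2 := by
        intro t
        have he : Sum.elim (x + t • z) y = Sum.elim x y + t • Sum.elim z (0 : Fin d → ℝ) := by
          ext (i | i) <;> simp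
        have := h2 (x + t • z)
        rw [he, expand_quad A hAsymm, ← hFy] at this
        linarith
      have := quad_aux _ _ hq
      linarith
    -- conclude ⟨v, A v⟩ = 0, contradicting PosDef
    have hdecomp : Sum.elim x y = Sum.elim x (0 : Fin d → ℝ) + Sum.elim (0 : Fin d → ℝ) y := by
      ext (i | i) <;> simp
    have hzero : dotProduct (Sum.elim x y) (A.mulVec (Sum.elim x y)) = 0 := by
      nth_rewrite 1 [hdecomp]
      rw [add_dotProduct, hcrit₁ x, hcrit₂ y, add_zero]
    have hpos := hM.dotProduct_mulVec_pos hv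
    rw [star_trivial, hvsplit] at hpos
    rw [hzero] at hpos
    exact lt_irrefl 0 hpos
end

section
/- Let M̂ = [[M̂₁, M̂₂],[M̂₂ᵀ, M̂₃]] be a symmetric positive-definite 2d×2d real matrix and F a symmetric positive-definite d×d matrix. Then the Gaussian function φ(x) = exp(-½⟨x, Fx⟩) is an eigenfunction of the integral operator (Gφ)(x) = ∫_{ℝ^d} exp(-½⟨(x,y), M̂(x,y)⟩) φ(y) dy if and only if F satisfies the Riccati equation F = M̂₁ - M̂₂(M̂₃ + F)^{-1}M̂₂ᵀ; in that case the eigenvalue is √((2π)^d / det(M̂₃ + F)). -/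
open MeasureTheory Matrix Real

-- centered Gaussian integral
lemma gauss_centered {d : ℕ} {S : Matrix (Fin d) (Fin d) ℝ} (hS : S.PosDef) :
    ∫ z : Fin d → ℝ, Real.exp (-(1/2) * dotProduct z (S.mulVec z))
      = Real.sqrt ((2 * Real.pi) ^ d / S.det) := by
  classical
  open scoped MatrixOrder in set R := CFC.sqrt S with hRdef
  open scoped MatrixOrder in have hRR : R * R = S := CFC.sqrt_mul_sqrt_self S hS.posSemidef.nonneg
  open scoped MatrixOrder in have hRher : R.IsHermitian := (CFC.sqrt_nonneg S).posSemidef.1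
  have hRsymm : Rᵀ = R := by
    have := hRher.eq
    rwa [Matrix.conjTranspose_eq_transpose_of_trivial] at this
  have hdet : R.det * R.det = S.det := by rw [← Matrix.det_mul, hRR]
  have hSdetpos : 0 < S.det := hS.det_pos
  have hRdetne : R.det ≠ 0 := by
    intro h
    rw [h, mul_zero] at hdet
    exact hSdetpos.ne hdet
  -- pointwise rewrite
  have key : ∀ z : Fin d → ℝ,
      dotProduct z (S.mulVec z)
        = dotProduct (R.mulVec z) (R.mulVec z) := by
    intro z
    rw [← hRR, ← Matrix.mulVec_mulVec, Matrix.dotProduct_mulVec, ← Matrix.mulVec_transpose, hRsymm]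
  have hmap : Measure.map (Matrix.toLin' R) volume
      = ENNReal.ofReal (|R.det|⁻¹) • volume := by
    have := Real.map_matrix_volume_pi_eq_smul_volume_pi hRdetne
    rwa [abs_inv] at this
  have hint : ∫ z : Fin d → ℝ, Real.exp (-(1/2) * dotProduct z (S.mulVec z))
      = |R.det|⁻¹ * ∫ w : Fin d → ℝ, Real.exp (-(1/2) * dotProduct w w) := by
    have h1 : ∀ z, Real.exp (-(1/2) * dotProduct z (S.mulVec z))
        = (fun w => Real.exp (-(1/2) * dotProduct w w)) (Matrix.toLin' R z) := by
      intro z; simp only [Matrix.toLin'_apply]; rw [key]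
    simp_rw [h1]
    rw [← integral_map (f := fun w => Real.exp (-(1/2) * dotProduct w w))
      (Continuous.aemeasurable (LinearMap.continuous_on_pi _)) ?_]
    · rw [hmap, integral_smul_measure, ENNReal.toReal_ofReal (by positivity), smul_eq_mul]
    · refine Continuous.aestronglyMeasurable ?_
      exact Real.continuous_exp.comp (by continuity)
  rw [hint]
  -- gaussian product
  have hprod : ∫ w : Fin d → ℝ, Real.exp (-(1/2) * dotProduct w w)
      = Real.sqrt (2 * Real.pi) ^ d := by
    have : ∀ w : Fin d → ℝ, Real.exp (-(1/2) * dotProduct w w)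
        = ∏ i, Real.exp (-(1/2) * (w i) ^ 2) := by
      intro w
      rw [← Real.exp_sum]
      congr 1
      simp [dotProduct, Finset.mul_sum, sq]
    simp_rw [this]
    rw [MeasureTheory.integral_fintype_prod_volume_eq_pow (ι := Fin d) (fun x : ℝ => Real.exp (-(1/2) * x ^ 2))]
    simp only [Fintype.card_fin]
    congr 1
    have := integral_gaussian (1/2 : ℝ)
    simp only [neg_mul] at this ⊢
    rw [this]
    norm_num [mul_comm]
  rw [hprod]
  have habs : |R.det| = Real.sqrt S.det := by
    rw [← hdet, ← Real.sqrt_mul_self_eq_abs]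
  have h1 : ((Real.sqrt (2 * Real.pi)) ^ d) ^ 2 = (2 * Real.pi) ^ d := by
    rw [← pow_mul, mul_comm d 2, pow_mul, Real.sq_sqrt (by positivity)]
  rw [habs, Real.sqrt_div' _ hSdetpos.le, ← h1, Real.sqrt_sq (by positivity)]
  ring

-- Gaussian with linear term
lemma gauss_linear {d : ℕ} {S : Matrix (Fin d) (Fin d) ℝ} (hS : S.PosDef)
    (hSs : S.IsSymm) (b : Fin d → ℝ) :
    ∫ y : Fin d → ℝ,
      Real.exp (-(1/2) * dotProduct y (S.mulVec y) + dotProduct b y)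
      = Real.sqrt ((2 * Real.pi) ^ d / S.det)
        * Real.exp ((1/2) * dotProduct b (S⁻¹.mulVec b)) := by
  classical
  set m : Fin d → ℝ := S⁻¹.mulVec b with hm
  have hdet : S.det ≠ 0 := hS.det_pos.ne'
  have hSm : S.mulVec m = b := by
    rw [hm, Matrix.mulVec_mulVec, Matrix.mul_nonsing_inv _ hdet.isUnit, Matrix.one_mulVec]
  have hvm : ∀ v : Fin d → ℝ, dotProduct m (S.mulVec v) = dotProduct b v := by
    intro v
    rw [Matrix.dotProduct_mulVec, ← Matrix.mulVec_transpose, hSs.eq, hSm]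
  have key : ∀ y : Fin d → ℝ,
      -(1/2) * dotProduct y (S.mulVec y) + dotProduct b y
      = -(1/2) * dotProduct (y - m) (S.mulVec (y - m))
          + (1/2) * dotProduct b m := by
    intro y
    rw [Matrix.mulVec_sub, dotProduct_sub, sub_dotProduct,
      sub_dotProduct, hvm y, hvm m]
    have h1 : dotProduct y (S.mulVec m) = dotProduct b y := by
      rw [hSm, dotProduct_comm]
    rw [h1]
    ring
  simp_rw [key, Real.exp_add]
  rw [integral_mul_const]
  have := integral_sub_right_eq_self (μ := volume)
    (fun z : Fin d → ℝ => Real.exp (-(1/2) * dotProduct z (S.mulVec z))) m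
  rw [this, gauss_centered hS]

-- symmetric matrix with vanishing quadratic form is zero
lemma quad_zero {d : ℕ} {A : Matrix (Fin d) (Fin d) ℝ} (hA : A.IsSymm)
    (h : ∀ x : Fin d → ℝ, dotProduct x (A.mulVec x) = 0) : A = 0 := by
  classical
  have hdiag : ∀ i, A i i = 0 := by
    intro i
    have := h (Pi.single i 1)
    rwa [Matrix.mulVec_single_one, single_dotProduct, one_mul, Matrix.col_apply] at this
  ext i j
  rcases eq_or_ne i j with rfl | hij
  · simpa using hdiag i
  · have := h (Pi.single i 1 + Pi.single j 1)
    rw [Matrix.mulVec_add, Matrix.mulVec_single_one, Matrix.mulVec_single_one,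
      dotProduct_add, add_dotProduct, add_dotProduct,
      single_dotProduct, single_dotProduct,
      single_dotProduct, single_dotProduct] at this
    simp only [one_mul, mul_one, Matrix.col_apply, hdiag i, hdiag j] at this
    have hsymm : A j i = A i j := hA.apply i j
    rw [hsymm] at this
    have : A i j = 0 := by linarith
    simpa using this


/-- Gaussian eigenfunctions of the Gaussian transfer operator: for a
positive-definite block matrix `M̂ = [[M̂₁,M̂₂],[M̂₂ᵀ,M̂₃]]` and a symmetric
positive-definite `F`, the Gaussian `φ(x) = exp(-½⟨x,Fx⟩)` is an eigenfunction
of `(Gφ)(x) = ∫ exp(-½⟨(x,y),M̂(x,y)⟩) φ(y) dy` iff `F` solves the Riccati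
equation `F = M̂₁ - M̂₂(M̂₃+F)⁻¹M̂₂ᵀ`, with eigenvalue
`√((2π)^d / det(M̂₃+F))`. -/
theorem stmt_16 (d : ℕ) (M₁ M₂ M₃ F : Matrix (Fin d) (Fin d) ℝ)
    (hM : (Matrix.fromBlocks M₁ M₂ M₂.transpose M₃).PosDef)
    (hFsymm : F.IsSymm) (hF : F.PosDef) :
    ((∃ lam : ℝ, ∀ x : Fin d → ℝ,
        (∫ y : Fin d → ℝ,
          Real.exp (-(1/2) * dotProduct (Sum.elim x y)
              ((Matrix.fromBlocks M₁ M₂ M₂.transpose M₃).mulVec (Sum.elim x y)))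
            * Real.exp (-(1/2) * dotProduct y (F.mulVec y)))
          = lam * Real.exp (-(1/2) * dotProduct x (F.mulVec x)))
      ↔ F = M₁ - M₂ * (M₃ + F)⁻¹ * M₂.transpose) ∧
    (F = M₁ - M₂ * (M₃ + F)⁻¹ * M₂.transpose →
      ∀ x : Fin d → ℝ,
        (∫ y : Fin d → ℝ,
          Real.exp (-(1/2) * dotProduct (Sum.elim x y)
              ((Matrix.fromBlocks M₁ M₂ M₂.transpose M₃).mulVec (Sum.elim x y)))
            * Real.exp (-(1/2) * dotProduct y (F.mulVec y)))
          = Real.sqrt ((2 * Real.pi) ^ d / (M₃ + F).det)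
              * Real.exp (-(1/2) * dotProduct x (F.mulVec x))) := by
  classical
  have hher := hM.1
  rw [Matrix.isHermitian_fromBlocks_iff] at hher
  obtain ⟨hM₁h, _, _, hM₃h⟩ := hher
  have hM₁s : M₁ᵀ = M₁ := by
    rw [← Matrix.conjTranspose_eq_transpose_of_trivial]; exact hM₁h.eq
  have hM₃s : M₃ᵀ = M₃ := by
    rw [← Matrix.conjTranspose_eq_transpose_of_trivial]; exact hM₃h.eq
  have hM₃ : M₃.PosDef := by
    refine Matrix.PosDef.of_dotProduct_mulVec_pos hM₃h fun y hy => ?_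
    have hxne : (Sum.elim (0 : Fin d → ℝ) y) ≠ 0 := by
      intro h0
      apply hy
      funext j
      simpa using congrFun h0 (Sum.inr j)
    have h2 := hM.dotProduct_mulVec_pos hxne
    rw [Matrix.fromBlocks_mulVec] at h2
    simpa [sumElim_dotProduct_sumElim] using h2
  set S := M₃ + F with hSdef
  have hS : S.PosDef := hM₃.add hF
  have hSsymm : S.IsSymm := by
    show Sᵀ = S
    rw [hSdef, Matrix.transpose_add, hM₃s, hFsymm.eq]
  have hdetS : 0 < S.det := hS.det_pos
  have hSinv : (S⁻¹)ᵀ = S⁻¹ := by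
    rw [Matrix.transpose_nonsing_inv, hSsymm.eq]
  set c := Real.sqrt ((2 * Real.pi) ^ d / S.det) with hcdef
  have hc : 0 < c := Real.sqrt_pos.2 (by positivity)
  set G := M₁ - M₂ * S⁻¹ * M₂ᵀ with hGdef
  have hGsymm : G.IsSymm := by
    show Gᵀ = G
    rw [hGdef, Matrix.transpose_sub, hM₁s, Matrix.transpose_mul, Matrix.transpose_mul,
      Matrix.transpose_transpose, hSinv, Matrix.mul_assoc]
  have key : ∀ x : Fin d → ℝ,
      (∫ y : Fin d → ℝ,
          Real.exp (-(1/2) * dotProduct (Sum.elim x y)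
              ((Matrix.fromBlocks M₁ M₂ M₂.transpose M₃).mulVec (Sum.elim x y)))
            * Real.exp (-(1/2) * dotProduct y (F.mulVec y)))
        = c * Real.exp (-(1/2) * dotProduct x (G.mulVec x)) := by
    intro x
    have hpt : ∀ y : Fin d → ℝ,
        Real.exp (-(1/2) * dotProduct (Sum.elim x y)
            ((Matrix.fromBlocks M₁ M₂ M₂.transpose M₃).mulVec (Sum.elim x y)))
          * Real.exp (-(1/2) * dotProduct y (F.mulVec y))
        = Real.exp (-(1/2) * dotProduct x (M₁.mulVec x))
          * Real.exp (-(1/2) * dotProduct y (S.mulVec y)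
              + dotProduct (-(M₂ᵀ.mulVec x)) y) := by
      intro y
      rw [← Real.exp_add, ← Real.exp_add]
      congr 1
      rw [Matrix.fromBlocks_mulVec]
      simp only [Sum.elim_comp_inl, Sum.elim_comp_inr]
      rw [sumElim_dotProduct_sumElim, dotProduct_add, dotProduct_add]
      have h1 : dotProduct x (M₂.mulVec y) = dotProduct (M₂ᵀ.mulVec x) y := by
        rw [Matrix.dotProduct_mulVec, ← Matrix.mulVec_transpose]
      have h2 : dotProduct y (M₂ᵀ.mulVec x) = dotProduct (M₂ᵀ.mulVec x) y :=
        dotProduct_comm _ _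
      have h3 : S.mulVec y = M₃.mulVec y + F.mulVec y := by
        rw [hSdef, Matrix.add_mulVec]
      rw [h1, h2, h3, neg_dotProduct, dotProduct_add]
      ring
    simp_rw [hpt]
    rw [integral_const_mul, gauss_linear hS hSsymm]
    have hq : dotProduct (-(M₂ᵀ.mulVec x)) (S⁻¹.mulVec (-(M₂ᵀ.mulVec x)))
        = dotProduct x ((M₂ * S⁻¹ * M₂ᵀ).mulVec x) := by
      rw [Matrix.mulVec_neg, neg_dotProduct, dotProduct_neg, neg_neg,
        Matrix.mulVec_mulVec, Matrix.mulVec_transpose M₂ x, ← Matrix.dotProduct_mulVec,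
        Matrix.mulVec_mulVec, ← Matrix.mul_assoc]
    rw [hq, mul_left_comm, ← Real.exp_add]
    congr 1
    rw [hGdef, Matrix.sub_mulVec, dotProduct_sub]
    ring
  constructor
  · constructor
    · rintro ⟨lam, hlam⟩
      have h0 := (key 0).symm.trans (hlam 0)
      simp only [zero_dotProduct, mul_zero, Real.exp_zero, mul_one] at h0
      have hxx : ∀ x : Fin d → ℝ,
          dotProduct x (G.mulVec x) = dotProduct x (F.mulVec x) := by
        intro x
        have h1 := (key x).symm.trans (hlam x)
        rw [← h0] at h1
        have h2 := mul_left_cancel₀ hc.ne' h1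
        have h3 := Real.exp_injective h2
        linarith
      have hz : G - F = 0 := by
        refine quad_zero ?_ fun x => ?_
        · show (G - F)ᵀ = G - F
          rw [Matrix.transpose_sub, hGsymm.eq, hFsymm.eq]
        · rw [Matrix.sub_mulVec, dotProduct_sub, hxx x, sub_self]
      have := sub_eq_zero.mp hz
      exact this.symm
    · intro hry
      refine ⟨c, fun x => ?_⟩
      rw [key x, ← hry]
  · intro hry x
    rw [key x, ← hry]
end

section
/- Let A, B, C be real d×d matrices with A, C symmetric positive definite, and suppose C solves C = A - B C^{-1} Bᵀ. Let σ be a permutation (reversal) matrix with σ² = I, σAσ = A, Bᵀ = σBσ. Then N := σCσ - BC^{-1}Bᵀ equals C - Bᵀ(σCσ)^{-1}B and satisfies σNσ = N. -/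
/-- Consistency of the two Schur-complement expressions for the marginal
Hessian `N` of the Gaussian bulk measure: if `C` is symmetric positive
definite and solves `C = A - B C⁻¹ Bᵀ`, with reversal symmetries
`σ² = 1`, `σAσ = A`, `Bᵀ = σBσ`, then
`N := σCσ - BC⁻¹Bᵀ` equals `C - Bᵀ(σCσ)⁻¹B` and satisfies `σNσ = N`. -/
theorem stmt_17 (d : ℕ) (A B C σ : Matrix (Fin d) (Fin d) ℝ)
    (hA : A.PosDef) (hAsymm : A.IsSymm)
    (hC : C.PosDef) (hCsymm : C.IsSymm)
    (hRic : C = A - B * C⁻¹ * B.transpose)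
    (hσ2 : σ * σ = 1) (hσA : σ * A * σ = A)
    (hBT : B.transpose = σ * B * σ) :
    σ * C * σ - B * C⁻¹ * B.transpose
        = C - B.transpose * (σ * C * σ)⁻¹ * B ∧
    σ * (σ * C * σ - B * C⁻¹ * B.transpose) * σ
        = σ * C * σ - B * C⁻¹ * B.transpose := by
  have hCd : IsUnit C.det := isUnit_iff_ne_zero.2 (ne_of_gt hC.det_pos)
  have hCi : C * C⁻¹ = 1 := Matrix.mul_nonsing_inv C hCd
  have hInv : (σ * C * σ)⁻¹ = σ * C⁻¹ * σ := by
    apply Matrix.inv_eq_right_inv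
    calc σ * C * σ * (σ * C⁻¹ * σ) = σ * C * (σ * σ) * C⁻¹ * σ := by noncomm_ring
    _ = σ * (C * C⁻¹) * σ := by rw [hσ2]; noncomm_ring
    _ = 1 := by rw [hCi]; rw [mul_one, hσ2]
  have hB : B = σ * B.transpose * σ := by
    rw [hBT]
    calc B = 1 * B * 1 := by noncomm_ring
    _ = σ * (σ * B * σ) * σ := by rw [← hσ2]; noncomm_ring
  have hBB : B * C⁻¹ * B.transpose = A - C := by
    conv_rhs => rw [hRic]
    abel
  have hRHS : B.transpose * (σ * C * σ)⁻¹ * B = σ * (A - C) * σ := by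
    rw [hInv, hBT]
    nth_rewrite 2 [hB]
    calc σ * B * σ * (σ * C⁻¹ * σ) * (σ * B.transpose * σ)
        = σ * B * (σ * σ) * C⁻¹ * (σ * σ) * B.transpose * σ := by noncomm_ring
    _ = σ * (B * C⁻¹ * B.transpose) * σ := by rw [hσ2]; noncomm_ring
    _ = σ * (A - C) * σ := by rw [hBB]
  constructor
  · rw [hBB, hRHS, mul_sub, sub_mul, hσA]; abel
  · rw [hBB]
    calc σ * (σ * C * σ - (A - C)) * σ
        = (σ * σ) * C * (σ * σ) - σ * A * σ + σ * C * σ := by noncomm_ring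
    _ = σ * C * σ - (A - C) := by rw [hσ2, hσA]; noncomm_ring
end
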